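/- Suppose there exist q^t strong double large sets of orthogonal arrays SDLOA(q^t; t, 2t, q) over F_q, written as q^t × q^t matrices C_H = (C^{(H)}_{X,Y}) with entries in F_q^{2t}, indexed by H ∈ F_q^t, such that for each X the collection {C^{(H)}_{X,Y} : Y, H ∈ F_q^t}, for each Y the collection {C^{(H)}_{X,Y} : X, H ∈ F_q^t}, the diagonal collection {C^{(H)}_{X,X} : X, H ∈ F_q^t}, and the back-diagonal collection {C^{(H)}_{X, X̃−X} : X, H ∈ F_q^t} each consist of all q^{2t} vectors of F_q^{2t}, each occurring exactly once. Then there exists a q^t-CMS(q^t, t). -/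
import Mathlib


open Finset

/-- An orthogonal array of strength `t` with `k` rows (constraints), columns indexed
by `ι`, symbols in `α`, and index `lam`: in every choice of `t` distinct rows,
every `t`-tuple of symbols appears in exactly `lam` columns. -/
def IsOAOn {α ι : Type*} [Fintype α] [DecidableEq α] [Fintype ι] {k : ℕ} (t : ℕ)
    (A : Fin k → ι → α) (lam : ℕ) : Prop :=
  ∀ rows : Fin t → Fin k, Function.Injective rows → ∀ x : Fin t → α,
    (Finset.univ.filter fun c : ι => ∀ i, A (rows i) c = x i).card = lam

/-- An array is simple if no two of its columns are identical. -/
def IsSimpleArr {α ι : Type*} {k : ℕ} (A : Fin k → ι → α) : Prop :=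
  Function.Injective fun c : ι => fun i => A i c

/-- A large set of orthogonal arrays: a family (indexed by `σ`) of simple OAs of
strength `t` and index `lam` such that every `k`-tuple of symbols occurs as a
column of exactly one array of the family. -/
def IsLOAOn {α ι σ : Type*} [Fintype α] [DecidableEq α] [Fintype ι] {k : ℕ} (t : ℕ)
    (A : σ → Fin k → ι → α) (lam : ℕ) : Prop :=
  (∀ s, IsOAOn t (A s) lam ∧ IsSimpleArr (A s)) ∧
  ∀ x : Fin k → α, ∃! p : σ × ι, (fun i => A p.1 i p.2) = x

/-- A strong double large set of orthogonal arrays `SDLOA(N; t, k, v)`: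
the family `A_0, …, A_{N-1}` is an LOA, the derived arrays `B_j`
(whose `s`-th column is the `j`-th column of `A_s`) form an LOA, and the arrays
`D` (`j`-th column = `j`-th column of `A_j`) and `D'` (`j`-th column =
`(N-1-j)`-th column of `A_j`) are both OAs. -/
def IsSDLOA {α : Type*} [Fintype α] [DecidableEq α] {k N : ℕ} (t : ℕ)
    (A : Fin N → Fin k → Fin N → α) (lam : ℕ) : Prop :=
  IsLOAOn t A lam ∧
  IsLOAOn t (fun (j : Fin N) (i : Fin k) (s : Fin N) => A s i j) lam ∧
  IsOAOn t (fun (i : Fin k) (j : Fin N) => A j i j) lam ∧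
  IsOAOn t (fun (i : Fin k) (j : Fin N) => A j i (Fin.rev j)) lam

/-- A `t`-multimagic square of order `n`: an `n × n` matrix whose entries are the
consecutive integers `0, …, n^2 - 1` and such that, for every `1 ≤ e ≤ t`,
the entrywise `e`-th power has equal row sums, column sums, and sums on both
diagonals. -/
def IsMultimagic (n t : ℕ) (M : Fin n → Fin n → ℕ) : Prop :=
  (∀ i j, M i j < n ^ 2) ∧
  (Function.Injective fun p : Fin n × Fin n => M p.1 p.2) ∧
  ∀ e, 1 ≤ e → e ≤ t → ∃ S,
    (∀ i, ∑ j, (M i j) ^ e = S) ∧ (∀ j, ∑ i, (M i j) ^ e = S) ∧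
    (∑ i, (M i i) ^ e = S) ∧ (∑ i, (M i (Fin.rev i)) ^ e = S)

/-- A set of `m` complementary `t`-multimagic squares of order `n`, `m`-CMS(`n`,`t`):
`m` multimagic squares such that summing the `(t+1)`-st powers of the entries over
all `m` squares along any fixed row, any fixed column, or either diagonal always
gives `m · S_{t+1}(n)` (the conditions are stated multiplied through by `n`). -/
def IsCMS (m n t : ℕ) (B : Fin m → Fin n → Fin n → ℕ) : Prop :=
  (∀ s, IsMultimagic n t (B s)) ∧
  (∀ i, n * ∑ s, ∑ j, (B s i j) ^ (t + 1) = m * ∑ k ∈ Finset.range (n ^ 2), k ^ (t + 1)) ∧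
  (∀ j, n * ∑ s, ∑ i, (B s i j) ^ (t + 1) = m * ∑ k ∈ Finset.range (n ^ 2), k ^ (t + 1)) ∧
  (n * ∑ s, ∑ i, (B s i i) ^ (t + 1) = m * ∑ k ∈ Finset.range (n ^ 2), k ^ (t + 1)) ∧
  (n * ∑ s, ∑ i, (B s i (Fin.rev i)) ^ (t + 1) = m * ∑ k ∈ Finset.range (n ^ 2), k ^ (t + 1))

/-- Any `t` rows of the matrix `M` are linearly independent. -/
def RowsIndep {F : Type*} [Field F] {m' : Type*} {s : ℕ} (t : ℕ)
    (M : Matrix m' (Fin s) F) : Prop :=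
  ∀ rows : Fin t → m', Function.Injective rows → LinearIndependent F fun i => M (rows i)

/-- The block matrix `(A, B)` (with `A, B` of the same shape) is nonsingular, phrased
via bijectivity of the associated linear map. -/
def NonsingularPair {F : Type*} [Field F] {m' : Type*} {s : ℕ}
    (A B : Matrix m' (Fin s) F) : Prop :=
  Function.Bijective fun p : (Fin s → F) × (Fin s → F) => A.mulVec p.1 + B.mulVec p.2

section CMSHelpers


lemma fiber_sum {V X : Type*} [Fintype V] [Fintype X] [DecidableEq X]
    (β : V → X) (n : ℕ) (h : ∀ x, (Finset.univ.filter fun v => β v = x).card = n)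
    (Φ : X → ℕ) : ∑ v, Φ (β v) = n * ∑ x, Φ x := by
  classical
  rw [← Finset.sum_fiberwise Finset.univ β fun v => Φ (β v), Finset.mul_sum]
  refine Finset.sum_congr rfl fun x _ => ?_
  calc ∑ v ∈ Finset.univ.filter fun v => β v = x, Φ (β v)
      = ∑ _v ∈ Finset.univ.filter fun v => β v = x, Φ x := by
        refine Finset.sum_congr rfl fun v hv => ?_
        simp only [Finset.mem_filter] at hv
        rw [hv.2]
    _ = n * Φ x := by rw [Finset.sum_const, h, smul_eq_mul]

lemma fiber_card {α : Type*} [Fintype α] [DecidableEq α] {n t : ℕ}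
    (rows : Fin t → Fin n) (hinj : Function.Injective rows) (x : Fin t → α) :
    (Finset.univ.filter fun v : Fin n → α => ∀ i, v (rows i) = x i).card
      = Fintype.card α ^ (n - t) := by
  classical
  rw [← Fintype.card_subtype]
  have eqv : {v : Fin n → α // ∀ i, v (rows i) = x i} ≃
      ({i : Fin n // i ∉ Set.range rows} → α) := by
    refine ⟨fun v i => v.1 i.1, fun u => ⟨fun i => if h : i ∈ Set.range rows
      then x ((Equiv.ofInjective rows hinj).symm ⟨i, h⟩) else u ⟨i, h⟩, ?_⟩, ?_, ?_⟩
    · intro j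
      have h : rows j ∈ Set.range rows := ⟨j, rfl⟩
      simp only [dif_pos h]
      congr 1
      have h2 : (Equiv.ofInjective rows hinj) j = ⟨rows j, h⟩ := rfl
      rw [← h2, Equiv.symm_apply_apply]
    · intro v
      ext i
      by_cases h : i ∈ Set.range rows
      · simp only [dif_pos h]
        obtain ⟨j, rfl⟩ := h
        have h' : rows j ∈ Set.range rows := ⟨j, rfl⟩
        have h2 : (Equiv.ofInjective rows hinj) j = ⟨rows j, h'⟩ := rfl
        rw [← h2, Equiv.symm_apply_apply, v.2 j]
      · simp only [dif_neg h]
    · intro u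
      ext i
      simp only [dif_neg i.2]
  rw [Fintype.card_congr eqv, Fintype.card_fun]
  congr 1
  rw [Fintype.card_subtype_compl]
  have h3 : Fintype.card {i : Fin n // i ∈ Set.range rows} = t := by
    exact (Fintype.card_congr (Equiv.ofInjective rows hinj).symm).trans (Fintype.card_fin t)
  rw [h3, Fintype.card_fin]

lemma exists_factor {e t n : ℕ} (he : e ≤ t) (ht : t ≤ n) (g : Fin e → Fin n) :
    ∃ rows : Fin t → Fin n, Function.Injective rows ∧
      ∃ r : Fin e → Fin t, ∀ j, g j = rows (r j) := by
  classical
  have hc : (Finset.univ.image g).card ≤ t :=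
    le_trans (Finset.card_image_le.trans (by simp)) he
  obtain ⟨T, hsub, hcard⟩ := Finset.exists_superset_card_eq hc (by simpa using ht)
  set iso := T.orderIsoOfFin hcard
  refine ⟨fun i => (iso i : Fin n), fun a b hab => iso.injective (Subtype.ext hab), ?_⟩
  refine ⟨fun j => iso.symm ⟨g j, hsub (Finset.mem_image_of_mem g (Finset.mem_univ j))⟩,
    fun j => ?_⟩
  simp

lemma geom_aux (q : ℕ) (hq : 1 ≤ q) : ∀ t : ℕ, ∑ i : Fin t, (q - 1) * q ^ (i : ℕ) = q ^ t - 1 := by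
  intro t; induction t with
  | zero => simp
  | succ t ih =>
    rw [Fin.sum_univ_castSucc]
    simp only [Fin.coe_castSucc, Fin.val_last]
    rw [ih, pow_succ]
    have h1 : 1 ≤ q ^ t := Nat.one_le_pow _ _ hq
    have h2 : (q - 1) * q ^ t = q ^ t * q - q ^ t := by
      rw [Nat.sub_mul, one_mul, mul_comm]
    have h3 : q ^ t ≤ q ^ t * q := Nat.le_mul_of_pos_right _ hq
    omega

lemma rev_digits {q t : ℕ} (d : Fin t → Fin q) :
    finFunctionFinEquiv (fun i => Fin.rev (d i)) = Fin.rev (finFunctionFinEquiv d) := by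
  by_cases ht : t = 0
  · subst ht
    apply Fin.ext
    have h1 := (finFunctionFinEquiv (fun i : Fin 0 => Fin.rev (d i))).isLt
    have h2 := (Fin.rev (finFunctionFinEquiv d)).isLt
    simp only [pow_zero] at h1 h2
    omega
  · have hq : 1 ≤ q := (d ⟨0, Nat.pos_of_ne_zero ht⟩).pos
    apply Fin.ext
    have hab : (finFunctionFinEquiv (fun i => Fin.rev (d i)) : ℕ)
        + (finFunctionFinEquiv d : ℕ) = q ^ t - 1 := by
      rw [finFunctionFinEquiv_apply, finFunctionFinEquiv_apply, ← Finset.sum_add_distrib,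
        ← geom_aux q hq t]
      refine Finset.sum_congr rfl fun i _ => ?_
      rw [← Nat.add_mul]
      congr 1
      have hlt := (d i).isLt
      rw [Fin.val_rev]
      omega
    have h1 := (finFunctionFinEquiv (fun i => Fin.rev (d i))).isLt
    have h2 := (finFunctionFinEquiv d).isLt
    rw [Fin.val_rev]
    omega

lemma key_sum {F : Type} [Field F] [Fintype F] [DecidableEq F] {t : ℕ} {ι : Type*}
    [Fintype ι] [DecidableEq ι] (A : Fin (2*t) → ι → F) (hA : IsOAOn t A 1)
    (f : Fin (2*t) → F → ℕ) {e : ℕ} (he : e ≤ t) :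
    ∑ v : Fin (2*t) → F, (∑ i, f i (v i)) ^ e
      = Fintype.card F ^ t * ∑ c, (∑ i, f i (A i c)) ^ e := by
  classical
  have expand : ∀ (w : Fin (2*t) → F), (∑ i, f i (w i)) ^ e
      = ∑ g : Fin e → Fin (2*t), ∏ j, f (g j) (w (g j)) := by
    intro w
    have h0 : (∑ i, f i (w i)) ^ e = ∏ _j : Fin e, (∑ i, f i (w i)) := by
      simp [Finset.prod_const]
    rw [h0, Finset.prod_univ_sum (fun _ => Finset.univ) (fun _j i => f i (w i)),
      Fintype.piFinset_univ]
  simp_rw [expand]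
  rw [Finset.sum_comm]
  conv_rhs => rw [Finset.sum_comm]
  rw [Finset.mul_sum]
  refine Finset.sum_congr rfl fun g _ => ?_
  obtain ⟨rows, hinj, r, hgr⟩ := exists_factor he (by rw [two_mul]; exact Nat.le_add_left t t) g
  set Φ : (Fin t → F) → ℕ := fun x => ∏ j, f (g j) (x (r j)) with hPhi
  have h1 : ∑ v : Fin (2*t) → F, ∏ j, f (g j) (v (g j))
      = Fintype.card F ^ t * ∑ x : Fin t → F, Φ x := by
    have hfib : ∀ x : Fin t → F,
        (Finset.univ.filter fun v : Fin (2*t) → F =>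
          (fun i => v (rows i)) = x).card = Fintype.card F ^ (2*t - t) := by
      intro x
      rw [← fiber_card rows hinj x]
      congr 1
      ext v
      simp [funext_iff]
    have heq := fiber_sum (fun v : Fin (2*t) → F => fun i => v (rows i)) _ hfib Φ
    have h3 : 2*t - t = t := by rw [two_mul]; exact Nat.add_sub_cancel t t
    rw [h3] at heq
    rw [← heq]
    refine Finset.sum_congr rfl fun v _ => ?_
    simp only [hPhi]
    refine Finset.prod_congr rfl fun j _ => ?_
    rw [hgr j]
  have h2 : ∑ c : ι, ∏ j, f (g j) (A (g j) c) = 1 * ∑ x : Fin t → F, Φ x := by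
    have hfib : ∀ x : Fin t → F,
        (Finset.univ.filter fun c : ι => (fun i => A (rows i) c) = x).card = 1 := by
      intro x
      rw [← hA rows hinj x]
      congr 1
      ext c
      simp [funext_iff]
    have := fiber_sum (fun c : ι => fun i => A (rows i) c) _ hfib Φ
    rw [← this]
    refine Finset.sum_congr rfl fun c _ => ?_
    simp only [hPhi]
    refine Finset.prod_congr rfl fun j _ => ?_
    rw [hgr j]
  rw [h1, h2, one_mul]

end CMSHelpers

/-- Given `q^t` SDLOA(q^t; t, 2t, q)'s `C_H` (written as `q^t × q^t`
matrices with rows/columns indexed by `F_q^t` and entries in `F_q^{2t}`: each row,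
each column, the main diagonal and the back diagonal of `C_H` form an OA, and the
rows of `C_H` form an LOA), such that the row collections `R_X`, column collections
`T_Y`, the diagonal collection `U` and the back-diagonal collection `U'` each
contain every vector of `F_q^{2t}` exactly once, there exists a q^t-CMS(q^t, t). -/
theorem cms_of_sdloa_family {F : Type} [Field F] [Fintype F] [DecidableEq F] {t : ℕ}
    (xi : Fin (Fintype.card F) → F) (hxi : Function.Bijective xi)
    (omega : F) (hsum : ∀ j, xi j + xi (Fin.rev j) = omega)
    (C : (Fin t → F) → (Fin t → F) → (Fin t → F) → Fin (2 * t) → F)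
    -- each C_H is an SDLOA(q^t; t, 2t, q):
    (hrows : ∀ H, IsLOAOn t (fun (X : Fin t → F) (i : Fin (2 * t)) (Y : Fin t → F) =>
      C H X Y i) 1)
    (hcols : ∀ H Y, IsOAOn t (fun (i : Fin (2 * t)) (X : Fin t → F) => C H X Y i) 1)
    (hdiag : ∀ H, IsOAOn t (fun (i : Fin (2 * t)) (X : Fin t → F) => C H X X i) 1)
    (hback : ∀ H, IsOAOn t (fun (i : Fin (2 * t)) (X : Fin t → F) =>
      C H X (fun j => omega - X j) i) 1)
    -- the collections R_X, T_Y, U, U' each cover F_q^{2t} exactly once: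
    (hR : ∀ X : Fin t → F, ∀ v : Fin (2 * t) → F,
      ∃! p : (Fin t → F) × (Fin t → F), C p.2 X p.1 = v)
    (hT : ∀ Y : Fin t → F, ∀ v : Fin (2 * t) → F,
      ∃! p : (Fin t → F) × (Fin t → F), C p.2 p.1 Y = v)
    (hU : ∀ v : Fin (2 * t) → F,
      ∃! p : (Fin t → F) × (Fin t → F), C p.2 p.1 p.1 = v)
    (hU' : ∀ v : Fin (2 * t) → F,
      ∃! p : (Fin t → F) × (Fin t → F), C p.2 p.1 (fun j => omega - p.1 j) = v) :
    ∃ B : Fin (Fintype.card F ^ t) → Fin (Fintype.card F ^ t) → Fin (Fintype.card F ^ t) → ℕ,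
      IsCMS (Fintype.card F ^ t) (Fintype.card F ^ t) t B := by
  classical
  have hq : 0 < Fintype.card F := Fintype.card_pos
  have hNpos : 0 < Fintype.card F ^ t := pow_pos hq t
  set xiE : Fin (Fintype.card F) ≃ F := Equiv.ofBijective xi hxi with hxiE
  set E : Fin (Fintype.card F ^ t) ≃ (Fin t → F) :=
    finFunctionFinEquiv.symm.trans (Equiv.piCongrRight fun _ => xiE) with hE
  set encE : (Fin (2*t) → F) ≃ Fin (Fintype.card F ^ (2*t)) :=
    (Equiv.piCongrRight fun _ => xiE.symm).trans finFunctionFinEquiv with hencE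
  set enc : (Fin (2*t) → F) → ℕ := fun v => (encE v : ℕ) with hencdef
  set f : Fin (2*t) → F → ℕ :=
    fun i a => ((xiE.symm a : Fin (Fintype.card F)) : ℕ) * (Fintype.card F) ^ (i : ℕ) with hf
  -- encoding as a weighted sum
  have henc : ∀ v : Fin (2*t) → F, (∑ i, f i (v i)) = enc v := by
    intro v
    have : encE v = finFunctionFinEquiv (fun i => xiE.symm (v i)) := rfl
    rw [hencdef]
    simp only [this, finFunctionFinEquiv_apply, hf]
  -- complement property of E
  have hErev : ∀ j : Fin (Fintype.card F ^ t), E (Fin.rev j) = fun i => omega - E j i := by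
    intro j
    have hdig : (finFunctionFinEquiv.symm (Fin.rev j) : Fin t → Fin (Fintype.card F))
        = fun i => Fin.rev (finFunctionFinEquiv.symm j i) := by
      apply finFunctionFinEquiv.injective
      rw [Equiv.apply_symm_apply, rev_digits, Equiv.apply_symm_apply]
    have hEapp : ∀ (k : Fin (Fintype.card F ^ t)) (i : Fin t),
        E k i = xiE (finFunctionFinEquiv.symm k i) := by
      intro k i
      rfl
    funext i
    rw [hEapp, hEapp, hdig]
    have hs := hsum (finFunctionFinEquiv.symm j i)
    have h1 : xiE (Fin.rev (finFunctionFinEquiv.symm j i))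
        = xi (Fin.rev (finFunctionFinEquiv.symm j i)) := rfl
    have h2 : xiE (finFunctionFinEquiv.symm j i) = xi (finFunctionFinEquiv.symm j i) := rfl
    rw [h1, h2, ← hs]
    ring
  have hNsq : (Fintype.card F ^ t) ^ 2 = Fintype.card F ^ (2*t) := by
    rw [← pow_mul, Nat.mul_comm]
  have henclt : ∀ v, enc v < (Fintype.card F ^ t) ^ 2 := by
    intro v; rw [hNsq]; exact (encE v).isLt
  have hencinj : Function.Injective enc := fun a b h => encE.injective (Fin.val_injective h)
  have hsum_enc : ∀ Φ : ℕ → ℕ, ∑ v : Fin (2*t) → F, Φ (enc v)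
      = ∑ k ∈ Finset.range ((Fintype.card F ^ t) ^ 2), Φ k := by
    intro Φ
    rw [hNsq, ← Fin.sum_univ_eq_sum_range]
    exact Equiv.sum_comp encE fun k => Φ (k : ℕ)
  have keyconv : ∀ (A : Fin (2*t) → (Fin t → F) → F), IsOAOn t A 1 → ∀ {e : ℕ}, e ≤ t →
      Fintype.card F ^ t * ∑ Y : Fin t → F, (enc (fun k => A k Y)) ^ e
        = ∑ v : Fin (2*t) → F, (enc v) ^ e := by
    intro A hA e he
    have h := key_sum A hA f he
    simp_rw [henc] at h
    exact h.symm
  refine ⟨fun s i j => enc (C (E s) (E i) (E j)), ?_, ?_, ?_, ?_, ?_⟩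
  · -- each square is multimagic
    intro s
    refine ⟨fun i j => henclt _, ?_, ?_⟩
    · -- injectivity
      intro p p' hpp
      have h1 : C (E s) (E p.1) (E p.2) = C (E s) (E p'.1) (E p'.2) := hencinj hpp
      have h2 := (hrows (E s)).2 (C (E s) (E p.1) (E p.2))
      have hu : ((E p.1, E p.2) : (Fin t → F) × (Fin t → F)) = (E p'.1, E p'.2) :=
        h2.unique rfl h1.symm
      have hx : E p.1 = E p'.1 := congrArg Prod.fst hu
      have hy : E p.2 = E p'.2 := congrArg Prod.snd hu
      exact Prod.ext (E.injective hx) (E.injective hy)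
    · -- power sums
      intro e he1 he2
      have hrowsum : ∀ i : Fin (Fintype.card F ^ t),
          Fintype.card F ^ t * ∑ j, (enc (C (E s) (E i) (E j))) ^ e
            = ∑ v : Fin (2*t) → F, (enc v) ^ e := by
        intro i
        have h := keyconv (fun k Y => C (E s) (E i) Y k) ((hrows (E s)).1 (E i)).1 he2
        rw [← h]
        congr 1
        exact Equiv.sum_comp E fun Y => (enc (C (E s) (E i) Y)) ^ e
      have hcolsum : ∀ j : Fin (Fintype.card F ^ t),
          Fintype.card F ^ t * ∑ i, (enc (C (E s) (E i) (E j))) ^ e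
            = ∑ v : Fin (2*t) → F, (enc v) ^ e := by
        intro j
        have h := keyconv (fun k X => C (E s) X (E j) k) (hcols (E s) (E j)) he2
        rw [← h]
        congr 1
        exact Equiv.sum_comp E fun X => (enc (C (E s) X (E j))) ^ e
      have hdiagsum :
          Fintype.card F ^ t * ∑ i, (enc (C (E s) (E i) (E i))) ^ e
            = ∑ v : Fin (2*t) → F, (enc v) ^ e := by
        have h := keyconv (fun k X => C (E s) X X k) (hdiag (E s)) he2
        rw [← h]
        congr 1
        exact Equiv.sum_comp E fun X => (enc (C (E s) X X)) ^ e
      have hbacksum :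
          Fintype.card F ^ t * ∑ i, (enc (C (E s) (E i) (E (Fin.rev i)))) ^ e
            = ∑ v : Fin (2*t) → F, (enc v) ^ e := by
        have h := keyconv (fun k X => C (E s) X (fun j2 => omega - X j2) k) (hback (E s)) he2
        rw [← h]
        congr 1
        refine Eq.trans ?_ (Equiv.sum_comp E fun X => (enc (C (E s) X (fun j2 => omega - X j2))) ^ e)
        refine Finset.sum_congr rfl fun i _ => ?_
        rw [hErev]
      refine ⟨∑ j, (enc (C (E s) (E ⟨0, hNpos⟩) (E j))) ^ e, fun i => ?_, fun j => ?_, ?_, ?_⟩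
      · exact Nat.eq_of_mul_eq_mul_left hNpos ((hrowsum i).trans (hrowsum ⟨0, hNpos⟩).symm)
      · exact Nat.eq_of_mul_eq_mul_left hNpos ((hcolsum j).trans (hrowsum ⟨0, hNpos⟩).symm)
      · exact Nat.eq_of_mul_eq_mul_left hNpos (hdiagsum.trans (hrowsum ⟨0, hNpos⟩).symm)
      · exact Nat.eq_of_mul_eq_mul_left hNpos (hbacksum.trans (hrowsum ⟨0, hNpos⟩).symm)
  · -- CMS rows
    intro i
    congr 1
    have hbij : Function.Bijective
        (fun pr : (Fin t → F) × (Fin t → F) => C pr.2 (E i) pr.1) :=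
      (Function.bijective_iff_existsUnique _).mpr (hR (E i))
    have hTh : ∀ p : Fin (Fintype.card F ^ t) × Fin (Fintype.card F ^ t),
        ((Equiv.prodComm (Fin (Fintype.card F ^ t)) (Fin (Fintype.card F ^ t))).trans
          ((E.prodCongr E).trans (Equiv.ofBijective _ hbij))) p
          = C (E p.1) (E i) (E p.2) := fun p => rfl
    refine Eq.trans ?_ (hsum_enc fun k => k ^ (t+1))
    refine Eq.trans ?_ (Equiv.sum_comp ((Equiv.prodComm (Fin (Fintype.card F ^ t))
      (Fin (Fintype.card F ^ t))).trans ((E.prodCongr E).trans (Equiv.ofBijective _ hbij)))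
      fun v => (enc v) ^ (t+1))
    refine Eq.trans (Fintype.sum_prod_type
      (fun p : Fin (Fintype.card F ^ t) × Fin (Fintype.card F ^ t) =>
        (enc (C (E p.1) (E i) (E p.2))) ^ (t+1))).symm ?_
    refine Finset.sum_congr rfl fun p _ => ?_
    rw [hTh p]
  · -- CMS cols
    intro j
    congr 1
    have hbij : Function.Bijective
        (fun pr : (Fin t → F) × (Fin t → F) => C pr.2 pr.1 (E j)) :=
      (Function.bijective_iff_existsUnique _).mpr (hT (E j))
    have hTh : ∀ p : Fin (Fintype.card F ^ t) × Fin (Fintype.card F ^ t),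
        ((Equiv.prodComm (Fin (Fintype.card F ^ t)) (Fin (Fintype.card F ^ t))).trans
          ((E.prodCongr E).trans (Equiv.ofBijective _ hbij))) p
          = C (E p.1) (E p.2) (E j) := fun p => rfl
    refine Eq.trans ?_ (hsum_enc fun k => k ^ (t+1))
    refine Eq.trans ?_ (Equiv.sum_comp ((Equiv.prodComm (Fin (Fintype.card F ^ t))
      (Fin (Fintype.card F ^ t))).trans ((E.prodCongr E).trans (Equiv.ofBijective _ hbij)))
      fun v => (enc v) ^ (t+1))
    refine Eq.trans (Fintype.sum_prod_type
      (fun p : Fin (Fintype.card F ^ t) × Fin (Fintype.card F ^ t) =>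
        (enc (C (E p.1) (E p.2) (E j))) ^ (t+1))).symm ?_
    refine Finset.sum_congr rfl fun p _ => ?_
    rw [hTh p]
  · -- CMS diagonal
    congr 1
    have hbij : Function.Bijective
        (fun pr : (Fin t → F) × (Fin t → F) => C pr.2 pr.1 pr.1) :=
      (Function.bijective_iff_existsUnique _).mpr hU
    have hTh : ∀ p : Fin (Fintype.card F ^ t) × Fin (Fintype.card F ^ t),
        ((Equiv.prodComm (Fin (Fintype.card F ^ t)) (Fin (Fintype.card F ^ t))).trans
          ((E.prodCongr E).trans (Equiv.ofBijective _ hbij))) p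
          = C (E p.1) (E p.2) (E p.2) := fun p => rfl
    refine Eq.trans ?_ (hsum_enc fun k => k ^ (t+1))
    refine Eq.trans ?_ (Equiv.sum_comp ((Equiv.prodComm (Fin (Fintype.card F ^ t))
      (Fin (Fintype.card F ^ t))).trans ((E.prodCongr E).trans (Equiv.ofBijective _ hbij)))
      fun v => (enc v) ^ (t+1))
    refine Eq.trans (Fintype.sum_prod_type
      (fun p : Fin (Fintype.card F ^ t) × Fin (Fintype.card F ^ t) =>
        (enc (C (E p.1) (E p.2) (E p.2))) ^ (t+1))).symm ?_
    refine Finset.sum_congr rfl fun p _ => ?_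
    rw [hTh p]
  · -- CMS back diagonal
    congr 1
    have hbij : Function.Bijective
        (fun pr : (Fin t → F) × (Fin t → F) => C pr.2 pr.1 (fun k => omega - pr.1 k)) :=
      (Function.bijective_iff_existsUnique _).mpr hU'
    have hTh : ∀ p : Fin (Fintype.card F ^ t) × Fin (Fintype.card F ^ t),
        ((Equiv.prodComm (Fin (Fintype.card F ^ t)) (Fin (Fintype.card F ^ t))).trans
          ((E.prodCongr E).trans (Equiv.ofBijective _ hbij))) p
          = C (E p.1) (E p.2) (fun k => omega - E p.2 k) := fun p => rfl
    refine Eq.trans ?_ (hsum_enc fun k => k ^ (t+1))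
    refine Eq.trans ?_ (Equiv.sum_comp ((Equiv.prodComm (Fin (Fintype.card F ^ t))
      (Fin (Fintype.card F ^ t))).trans ((E.prodCongr E).trans (Equiv.ofBijective _ hbij)))
      fun v => (enc v) ^ (t+1))
    refine Eq.trans ?_ (Fintype.sum_prod_type
      (fun p : Fin (Fintype.card F ^ t) × Fin (Fintype.card F ^ t) =>
        (enc (((Equiv.prodComm (Fin (Fintype.card F ^ t)) (Fin (Fintype.card F ^ t))).trans
          ((E.prodCongr E).trans (Equiv.ofBijective _ hbij))) p)) ^ (t+1))).symm
    refine Finset.sum_congr rfl fun s _ => Finset.sum_congr rfl fun i _ => ?_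
    show enc (C (E s) (E i) (E (Fin.rev i))) ^ (t+1) = _
    rw [hTh (s, i), hErev i]
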